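/- Let f(z) = ∑_{n=0}^∞ a_n z^n be analytic on the unit disk with |f| ≤ 1, let m ≥ 1, N ≥ 1 be integers and p ∈ (0,2]. Then |f(z^m)|^p + ∑_{n=N}^∞ |a_n| r^n ≤ 1 for all z with |z| = r ≤ ρ, where ρ is the minimal positive root of 2(1+x^m) x^N − p(1−x)(1−x^m) = 0. -/

import Mathlib

open Metric Complex Filter FormalMultilinearSeries
open scoped NNReal ENNReal

noncomputable def Complex.abs : AbsoluteValue ℂ ℝ where
  toFun z := ‖z‖
  map_mul' := norm_mul
  nonneg' := norm_nonneg
  eq_zero' _ := norm_eq_zero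
  add_le' := norm_add_le

lemma Complex.norm_eq_abs (z : ℂ) : ‖z‖ = Complex.abs z := rfl

lemma Complex.abs_apply (z : ℂ) : Complex.abs z = Real.sqrt (Complex.normSq z) := Complex.norm_def z

lemma Complex.sq_abs (z : ℂ) : Complex.abs z ^ 2 = Complex.normSq z := Complex.sq_norm z

@[simp] lemma Complex.abs_ofReal (x : ℝ) : Complex.abs (x : ℂ) = |x| := Complex.norm_real x

@[simp] lemma Complex.abs_natCast (n : ℕ) : Complex.abs (n : ℂ) = n := Complex.norm_natCast n

@[simp] lemma Complex.abs_conj (z : ℂ) : Complex.abs ((starRingEnd ℂ) z) = Complex.abs z :=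
  Complex.norm_conj z

lemma Complex.abs_pow (z : ℂ) (n : ℕ) : Complex.abs (z ^ n) = Complex.abs z ^ n := map_pow _ _ _

lemma abs_circleMap_zero (R θ : ℝ) : Complex.abs (circleMap 0 R θ) = |R| := norm_circleMap_zero R θ


lemma norm_ofScalars_c (d : ℕ → ℂ) (n : ℕ) : ‖ofScalars ℂ d n‖ = Complex.abs (d n) := by
  rw [ofScalars]
  rw [norm_smul (d n) (ContinuousMultilinearMap.mkPiAlgebraFin ℂ n ℂ),
    ContinuousMultilinearMap.norm_mkPiAlgebraFin, mul_one, Complex.norm_eq_abs]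

lemma hasFPowerSeriesAt_ofScalars (F : ℂ → ℂ) (d : ℕ → ℂ) (ε : ℝ) (hε : 0 < ε)
    (h : ∀ z : ℂ, Complex.abs z < ε → HasSum (fun j => d j * z ^ j) (F z)) :
    HasFPowerSeriesAt F (ofScalars ℂ d) 0 := by
  set t₁ : ℝ := min ε 1 / 2 with ht₁
  set t₂ : ℝ := min ε 1 * 3 / 4 with ht₂
  have hε1 : 0 < min ε 1 := lt_min hε one_pos
  have ht₁0 : 0 < t₁ := by positivity
  have ht₂ε : t₂ < ε := by
    have : min ε 1 ≤ ε := min_le_left _ _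
    nlinarith
  have ht₁2 : t₁ ≤ t₂ := by nlinarith
  have hsum2 : Summable fun j => Complex.abs (d j) * t₂ ^ j := by
    have := (h (t₂ : ℂ) (by rwa [Complex.abs_ofReal, abs_of_pos (by positivity)])).summable
    have hn := this.norm
    simpa [Complex.norm_eq_abs, map_mul, Complex.abs_ofReal, abs_of_pos (by positivity : (0:ℝ) < t₂),
      abs_pow, Complex.abs_pow] using hn
  have hrad : ENNReal.ofReal t₁ ≤ (ofScalars ℂ d).radius := by
    have hs : Summable fun n => ‖ofScalars ℂ d n‖ * (t₁.toNNReal : ℝ) ^ n := by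
      apply Summable.of_nonneg_of_le (fun n => by positivity) _ hsum2
      intro n
      rw [norm_ofScalars_c, Real.coe_toNNReal _ ht₁0.le]
      exact mul_le_mul_of_nonneg_left (pow_le_pow_left₀ ht₁0.le ht₁2 n) (AbsoluteValue.nonneg _ _)
    simpa [ENNReal.ofReal, Real.toNNReal] using (ofScalars ℂ d).le_radius_of_summable_norm hs
  have hball : HasFPowerSeriesOnBall F (ofScalars ℂ d) 0 (ENNReal.ofReal t₁) :=
    { r_le := hrad
      r_pos := by simpa using ht₁0
      hasSum := by
        intro y hy
        rw [EMetric.mem_ball, edist_zero_right, ← ofReal_norm_eq_enorm,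
          ENNReal.ofReal_lt_ofReal_iff ht₁0] at hy
        have hy' : Complex.abs y < ε := lt_of_lt_of_le hy (by rw [ht₁]; nlinarith [min_le_left ε 1])
        have := h y hy'
        rw [zero_add]
        refine HasSum.congr_fun this (fun n => ?_)
        rw [ofScalars_apply_eq, smul_eq_mul] }
  exact hball.hasFPowerSeriesAt

lemma coeff_unique {F : ℂ → ℂ} {d e : ℕ → ℂ} {ε : ℝ} (hε : 0 < ε)
    (hd : ∀ z : ℂ, Complex.abs z < ε → HasSum (fun j => d j * z ^ j) (F z))
    (he : ∀ z : ℂ, Complex.abs z < ε → HasSum (fun j => e j * z ^ j) (F z)) : d = e := by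
  have h1 := hasFPowerSeriesAt_ofScalars F d ε hε hd
  have h2 := hasFPowerSeriesAt_ofScalars F e ε hε he
  exact ofScalars_series_injective ℂ ℂ (h1.eq_formalMultilinearSeries h2)


lemma mobius_abs_le {c w : ℂ} (hc : Complex.abs c ≤ 1) (hw : Complex.abs w ≤ 1) :
    Complex.abs (w - c) ≤ Complex.abs (1 - (starRingEnd ℂ) c * w) := by
  have hc' : Complex.normSq c ≤ 1 := by
    rw [← Complex.sq_abs]; nlinarith [Complex.abs.nonneg c]
  have hw' : Complex.normSq w ≤ 1 := by
    rw [← Complex.sq_abs]; nlinarith [Complex.abs.nonneg w]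
  rw [Complex.abs_apply, Complex.abs_apply]
  apply Real.sqrt_le_sqrt
  rw [Complex.normSq_apply, Complex.normSq_apply] at *
  simp only [Complex.sub_re, Complex.sub_im, Complex.mul_re, Complex.mul_im,
    Complex.one_re, Complex.one_im, Complex.conj_re, Complex.conj_im] at *
  nlinarith [sq_nonneg (c.re*w.re + c.im*w.im), sq_nonneg (c.re*w.im - c.im*w.re)]

lemma sp_alg {A t x u : ℝ} (hA : 0 ≤ A) (hA1 : A ≤ 1) (ht : 0 ≤ t) (ht1 : t ≤ 1)
    (hx : 0 ≤ x) (hxt : x ≤ t) (hu : u ≤ A * x) :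
    (A^2 + 2*u + x^2) * (1 + A*t)^2 ≤ (A + t)^2 * (1 + 2*u + A^2*x^2) := by
  have hA2 : 0 ≤ 1 - A^2 := by nlinarith
  have ht2 : 0 ≤ 1 - t^2 := by nlinarith
  have P1 : 0 ≤ (1-A^2) * ((1-t^2) * (A*x - u)) :=
    mul_nonneg hA2 (mul_nonneg ht2 (by linarith))
  have P2 : 0 ≤ (1-A^2) * ((t-x) * (2*A*(1-t^2) + (t+x)*(1+A^2+2*A*t))) := by
    apply mul_nonneg hA2
    apply mul_nonneg (by linarith)
    have : 0 ≤ (t+x)*(1+A^2+2*A*t) := by positivity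
    nlinarith [mul_nonneg hA ht2]
  nlinarith [P1, P2]


lemma schwarz_pick (f : ℂ → ℂ) (hd : DifferentiableOn ℂ f (ball 0 1))
    (hb : ∀ z ∈ ball (0:ℂ) 1, Complex.abs (f z) ≤ 1) (w : ℂ) (hw : Complex.abs w < 1) :
    Complex.abs (f w) * (1 + Complex.abs (f 0) * Complex.abs w)
      ≤ Complex.abs (f 0) + Complex.abs w := by
  have h01 : (0:ℂ) ∈ ball (0:ℂ) 1 := by simp
  have hwb : w ∈ ball (0:ℂ) 1 := by simpa [mem_ball, Complex.dist_eq, Complex.norm_eq_abs] using hw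
  set A : ℝ := Complex.abs (f 0) with hA
  have hA0 : 0 ≤ A := Complex.abs.nonneg _
  have hA1 : A ≤ 1 := hb 0 h01
  have ht0 : 0 ≤ Complex.abs w := Complex.abs.nonneg _
  rcases eq_or_lt_of_le hA1 with hAeq | hAlt
  · have h1 : Complex.abs (f w) ≤ 1 := hb w hwb
    rw [hAeq]
    nlinarith [Complex.abs.nonneg (f w)]
  set q : ℂ := (starRingEnd ℂ) (f 0) with hq
  have habsq : Complex.abs q = A := by simp [hq, hA]
  set D : ℂ → ℂ := fun z => 1 - q * f z with hD
  have hqb : ∀ z ∈ ball (0:ℂ) 1, Complex.abs (q * f z) ≤ A := by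
    intro z hz
    rw [map_mul, habsq]
    nlinarith [hb z hz, Complex.abs.nonneg (f z)]
  have hDlb : ∀ z ∈ ball (0:ℂ) 1, 1 - A ≤ Complex.abs (D z) := by
    intro z hz
    have htri := Complex.abs.add_le (1 - q * f z) (q * f z)
    rw [sub_add_cancel, map_one] at htri
    have := hqb z hz
    simp only [hD]
    linarith
  have hDne : ∀ z ∈ ball (0:ℂ) 1, D z ≠ 0 := by
    intro z hz h0
    have := hDlb z hz
    rw [h0] at this; simp at this; linarith
  set k : ℂ → ℂ := fun z => (f z - f 0) * (D z)⁻¹ with hk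
  have hkd : DifferentiableOn ℂ k (ball 0 1) := by
    apply DifferentiableOn.mul (hd.sub (differentiableOn_const _))
    exact DifferentiableOn.inv ((differentiableOn_const _).sub
      ((differentiableOn_const _).mul hd)) hDne
  have hk1 : ∀ z ∈ ball (0:ℂ) 1, Complex.abs (k z) ≤ 1 := by
    intro z hz
    rw [hk]
    simp only [map_mul, map_inv₀]
    rw [mul_inv_le_iff₀ (by have := hDlb z hz; linarith), one_mul]
    exact mobius_abs_le hA1 (hb z hz)
  have hk0 : k 0 = 0 := by simp [hk]
  have hschwarz : Complex.abs (k w) ≤ Complex.abs w := by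
    have key : ∀ ε : ℝ, 0 < ε → Complex.abs (k w) ≤ Complex.abs w + ε := by
      intro ε hε
      have hmaps : Set.MapsTo k (ball 0 1) (ball (k 0) (1 + ε)) := by
        intro z hz
        rw [hk0, mem_ball, Complex.dist_eq, sub_zero]
        calc Complex.abs (k z) ≤ 1 := hk1 z hz
        _ < 1 + ε := by linarith
      have := Complex.dist_le_div_mul_dist_of_mapsTo_ball hkd (hmaps.mono_right ball_subset_closedBall) hwb
      rw [hk0, Complex.dist_eq, Complex.dist_eq, sub_zero, sub_zero, div_one] at this
      calc Complex.abs (k w) ≤ (1 + ε) * Complex.abs w := this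
      _ ≤ Complex.abs w + ε := by nlinarith
    by_contra hcon
    push_neg at hcon
    have := key ((Complex.abs (k w) - Complex.abs w)/2) (by linarith)
    linarith
  have hid : f w * (1 + q * k w) = f 0 + k w := by
    have h1 : k w * D w = f w - f 0 := by
      rw [hk, mul_assoc, inv_mul_cancel₀ (hDne w hwb), mul_one]
    simp only [hD] at h1
    linear_combination (-1 : ℂ) * h1
  have habs : Complex.abs (f w) * Complex.abs (1 + q * k w)
      = Complex.abs (f 0 + k w) := by rw [← map_mul, hid]
  set x : ℝ := Complex.abs (k w) with hx
  set t : ℝ := Complex.abs w with htdef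
  set u : ℝ := (q * k w).re with hu
  have hxt : x ≤ t := hschwarz
  have hx0 : 0 ≤ x := Complex.abs.nonneg _
  have ht1 : t ≤ 1 := le_of_lt hw
  have hub : u ≤ A * x := by
    calc u ≤ Complex.abs (q * k w) := Complex.re_le_norm _
    _ = A * x := by rw [map_mul, habsq]
  have hconjre : (f 0 * (starRingEnd ℂ) (k w)).re = u := by
    simp only [hu, hq, Complex.mul_re, Complex.conj_re, Complex.conj_im]
    ring
  have hsq1 : Complex.normSq (f 0 + k w) = A^2 + 2*u + x^2 := by
    rw [Complex.normSq_add, hconjre, ← Complex.sq_abs, ← Complex.sq_abs, ← hA, ← hx]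
    ring
  have hsq2 : Complex.normSq (1 + q * k w) = 1 + 2*u + A^2*x^2 := by
    rw [Complex.normSq_add, Complex.normSq_mul, Complex.normSq_one, one_mul,
      Complex.conj_re, ← Complex.sq_abs, ← Complex.sq_abs, habsq, ← hx, ← hu]
    ring
  set Y : ℝ := Complex.abs (1 + q * k w) with hY
  have hYsq : Y^2 = 1 + 2*u + A^2*x^2 := by rw [hY, Complex.sq_abs]; exact hsq2
  have hFsq : (Complex.abs (f 0 + k w))^2 = A^2 + 2*u + x^2 := by
    rw [Complex.sq_abs]; exact hsq1
  have hY0 : 0 < Y := by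
    have htri := Complex.abs.add_le (1 + q * k w) (-(q * k w))
    rw [add_neg_cancel_right, map_one, Complex.abs.map_neg, map_mul, habsq, ← hx] at htri
    nlinarith
  have hsp := sp_alg hA0 hA1 ht0 ht1 hx0 hxt hub
  have hfinal : (Complex.abs (f w) * (1 + A*t))^2 * Y^2 ≤ ((A + t))^2 * Y^2 := by
    have hmm : (Complex.abs (f w))^2 * Y^2 = A^2 + 2*u + x^2 := by
      rw [← mul_pow, habs, hFsq]
    calc (Complex.abs (f w) * (1 + A*t))^2 * Y^2
        = ((Complex.abs (f w))^2 * Y^2) * (1 + A*t)^2 := by ring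
      _ = (A^2 + 2*u + x^2) * (1 + A*t)^2 := by rw [hmm]
      _ ≤ (A + t)^2 * (1 + 2*u + A^2*x^2) := hsp
      _ = (A + t)^2 * Y^2 := by rw [hYsq]
  have h2 := le_of_mul_le_mul_right hfinal (by positivity : (0:ℝ) < Y^2)
  nlinarith [h2, Complex.abs.nonneg (f w), mul_nonneg hA0 ht0]


-- key step: given the averaged function g with gap coefficients, bound |a n|*R^n
lemma key_step (g : ℂ → ℂ) (b : ℕ → ℂ) (a0 : ℂ) (n : ℕ) (hn : 1 ≤ n)
    (hgd : DifferentiableOn ℂ g (ball 0 1))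
    (hgb1 : ∀ z ∈ ball (0:ℂ) 1, Complex.abs (g z) ≤ 1)
    (hgb : ∀ z ∈ ball (0:ℂ) 1, HasSum (fun j => b j * z ^ j) (g z))
    (hg0 : g 0 = a0)
    (hAlt : Complex.abs a0 < 1)
    (hbmid : ∀ j, 0 < j → j < n → b j = 0)
    (hb0 : b 0 = a0)
    (R : ℝ) (hR0 : 0 < R) (hR1 : R < 1) :
    Complex.abs (b n) * R ^ n ≤ 1 - Complex.abs a0 ^ 2 := by
  set A : ℝ := Complex.abs a0 with hA
  have hA0 : 0 ≤ A := Complex.abs.nonneg _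
  set q : ℂ := (starRingEnd ℂ) a0 with hq
  have habsq : Complex.abs q = A := by simp [hq, hA]
  set D : ℂ → ℂ := fun z => 1 - q * g z with hD
  have hqb : ∀ z ∈ ball (0:ℂ) 1, Complex.abs (q * g z) ≤ A := by
    intro z hz
    rw [map_mul, habsq]
    nlinarith [hgb1 z hz, Complex.abs.nonneg (g z)]
  have hDlb : ∀ z ∈ ball (0:ℂ) 1, 1 - A ≤ Complex.abs (D z) := by
    intro z hz
    have htri := Complex.abs.add_le (1 - q * g z) (q * g z)
    rw [sub_add_cancel, map_one] at htri
    have := hqb z hz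
    simp only [hD]
    linarith
  have hDne : ∀ z ∈ ball (0:ℂ) 1, D z ≠ 0 := by
    intro z hz h0
    have := hDlb z hz
    rw [h0] at this; simp at this; linarith
  set k : ℂ → ℂ := fun z => (g z - a0) * (D z)⁻¹ with hk
  have hkd : DifferentiableOn ℂ k (ball 0 1) := by
    apply DifferentiableOn.mul (hgd.sub (differentiableOn_const _))
    exact DifferentiableOn.inv ((differentiableOn_const _).sub
      ((differentiableOn_const _).mul hgd)) hDne
  have hk1 : ∀ z ∈ ball (0:ℂ) 1, Complex.abs (k z) ≤ 1 := by
    intro z hz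
    rw [hk]
    simp only [map_mul, map_inv₀]
    rw [mul_inv_le_iff₀ (by have := hDlb z hz; linarith), one_mul]
    exact mobius_abs_le hAlt.le (hgb1 z hz)
  have hk0 : k 0 = 0 := by simp [hk, hg0]
  have hkmul : ∀ z ∈ ball (0:ℂ) 1, k z * (1 - q * g z) = g z - a0 := by
    intro z hz
    rw [hk, mul_assoc]
    rw [show (1 - q * g z) = D z from rfl, inv_mul_cancel₀ (hDne z hz), mul_one]
  -- Cauchy power series of k on radius R
  have hsub : closedBall (0:ℂ) (R.toNNReal : ℝ) ⊆ ball (0:ℂ) 1 := by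
    rw [Real.coe_toNNReal _ hR0.le]
    exact closedBall_subset_ball hR1
  have hFP : HasFPowerSeriesOnBall k (cauchyPowerSeries k 0 R.toNNReal) 0 R.toNNReal :=
    DifferentiableOn.hasFPowerSeriesOnBall (hkd.mono hsub) (by simpa using hR0)
  set c : ℕ → ℂ := fun j => (cauchyPowerSeries k 0 R.toNNReal j) (fun _ => 1) with hc
  have hRco : ((R.toNNReal : ℝ≥0) : ℝ≥0∞) = ENNReal.ofReal R := rfl
  have hck : ∀ z : ℂ, Complex.abs z < R → HasSum (fun j => c j * z ^ j) (k z) := by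
    intro z hz
    have hmem : z ∈ EMetric.ball (0:ℂ) R.toNNReal := by
      rw [EMetric.ball, EMetric.mem_ball, edist_zero_right, ← ofReal_norm_eq_enorm, hRco]
      exact (ENNReal.ofReal_lt_ofReal_iff hR0).mpr hz
    have hs := hFP.hasSum hmem
    rw [zero_add] at hs
    have happ : ∀ j, (cauchyPowerSeries k 0 R.toNNReal j fun _ => z) = c j * z ^ j := by
      intro j
      have h2 := (cauchyPowerSeries k 0 R.toNNReal j).map_smul_univ (fun _ => z) (fun _ => (1:ℂ))
      calc (cauchyPowerSeries k 0 R.toNNReal j fun _ => z)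
          = (cauchyPowerSeries k 0 R.toNNReal j fun i => z • (1:ℂ)) := by norm_num
        _ = (∏ _i : Fin j, z) • (cauchyPowerSeries k 0 R.toNNReal j fun _ => (1:ℂ)) := h2
        _ = c j * z ^ j := by
            simp only [hc, smul_eq_mul, Finset.prod_const, Finset.card_univ, Fintype.card_fin]
            ring
    rwa [funext happ] at hs
  have hRR : ((R.toNNReal : ℝ)) = R := Real.coe_toNNReal _ hR0.le
  have hc0 : c 0 = 0 := by
    have h := hck 0 (by simpa using hR0)
    have h2 : HasSum (fun j => c j * (0:ℂ) ^ j) (c 0 * (0:ℂ) ^ 0) :=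
      hasSum_single 0 (fun b hb => by simp [zero_pow hb])
    have h3 := h.unique h2
    rw [hk0] at h3
    simpa using h3.symm
  have hcb : ∀ j, Complex.abs (c j) * R ^ j ≤ 1 := by
    intro j
    have hop : Complex.abs (c j) ≤ ‖cauchyPowerSeries k 0 R.toNNReal j‖ := by
      have h1 := (cauchyPowerSeries k 0 R.toNNReal j).le_opNorm (fun _ => (1:ℂ))
      simp only [norm_one, Finset.prod_const_one, mul_one] at h1
      exact h1
    have hcont : Continuous fun θ : ℝ => k (circleMap 0 (R.toNNReal : ℝ) θ) := by
      apply (hkd.continuousOn).comp_continuous (continuous_circleMap 0 _)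
      intro θ
      rw [mem_ball_zero_iff, Complex.norm_eq_abs, abs_circleMap_zero, hRR, abs_of_pos hR0]
      exact hR1
    have hint : (∫ θ in (0:ℝ)..2 * Real.pi, ‖k (circleMap 0 (R.toNNReal : ℝ) θ)‖)
        ≤ 2 * Real.pi := by
      have h2 : (∫ θ in (0:ℝ)..2 * Real.pi, ‖k (circleMap 0 (R.toNNReal : ℝ) θ)‖)
          ≤ ∫ _θ in (0:ℝ)..2 * Real.pi, (1:ℝ) := by
        apply intervalIntegral.integral_mono_on (by positivity)
          (hcont.norm.intervalIntegrable _ _) intervalIntegrable_const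
        intro θ _
        rw [Complex.norm_eq_abs]
        apply hk1
        rw [mem_ball_zero_iff, Complex.norm_eq_abs, abs_circleMap_zero, hRR, abs_of_pos hR0]
        exact hR1
      simpa using h2
    have hnorm := norm_cauchyPowerSeries_le k 0 (R.toNNReal : ℝ) j
    rw [hRR] at hnorm hop hint
    rw [abs_of_pos hR0] at hnorm
    have h3 : ‖cauchyPowerSeries k 0 R j‖ ≤ (R⁻¹) ^ j := by
      refine hnorm.trans ?_
      have hpig : (0:ℝ) < (2 * Real.pi)⁻¹ := by positivity
      have : (2 * Real.pi)⁻¹ * (∫ θ in (0:ℝ)..2 * Real.pi,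
          ‖k (circleMap 0 R θ)‖) ≤ (2 * Real.pi)⁻¹ * (2 * Real.pi) :=
        mul_le_mul_of_nonneg_left hint hpig.le
      rw [inv_mul_cancel₀ (by positivity : (2 * Real.pi) ≠ 0)] at this
      have hRj : (0:ℝ) ≤ R⁻¹ ^ j := by positivity
      nlinarith [this, hRj]
    calc Complex.abs (c j) * R ^ j ≤ (R⁻¹) ^ j * R ^ j :=
          mul_le_mul_of_nonneg_right (hop.trans h3) (by positivity)
      _ = 1 := by rw [← mul_pow, inv_mul_cancel₀ hR0.ne', one_pow]
  -- the second factor series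
  set e : ℕ → ℂ := fun j => (if j = 0 then (1:ℂ) else 0) - q * b j with he
  have hes : ∀ z ∈ ball (0:ℂ) 1, HasSum (fun j => e j * z ^ j) (1 - q * g z) := by
    intro z hz
    have h1 : HasSum (fun j => (if j = 0 then (1:ℂ) else 0) * z ^ j)
        ((if 0 = 0 then (1:ℂ) else 0) * z ^ 0) :=
      hasSum_single 0 (fun b hb => by simp [hb])
    simp only [if_pos rfl, pow_zero, mul_one] at h1
    have h2 := h1.sub ((hgb z hz).mul_left q)
    have h3 : (fun j => (if j = 0 then (1:ℂ) else 0) * z ^ j - q * (b j * z ^ j))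
        = fun j => e j * z ^ j := by
      funext j; rw [he]; ring
    rwa [h3] at h2
  -- Cauchy product
  have hprod : ∀ z : ℂ, Complex.abs z < R → HasSum
      (fun j => (∑ ij ∈ Finset.HasAntidiagonal.antidiagonal j, c ij.1 * e ij.2) * z ^ j) (g z - a0) := by
    intro z hz
    have hzb : z ∈ ball (0:ℂ) 1 := by
      rw [mem_ball_zero_iff, Complex.norm_eq_abs]; linarith
    have hcs := hck z hz
    have hesz := hes z hzb
    have hcn : Summable fun j => ‖c j * z ^ j‖ := hcs.summable.norm
    have hen : Summable fun j => ‖e j * z ^ j‖ := hesz.summable.norm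
    have hsumm := summable_sum_mul_antidiagonal_of_summable_norm' hcn hcn.of_norm hen hen.of_norm
    have htsum := tsum_mul_tsum_eq_tsum_sum_antidiagonal_of_summable_norm hcn hen
    rw [hcs.tsum_eq, hesz.tsum_eq] at htsum
    have hval : k z * (1 - q * g z) = g z - a0 := hkmul z hzb
    have h5 := hsumm.hasSum
    rw [← htsum, hval] at h5
    have hfix : (fun j => ∑ ij ∈ Finset.HasAntidiagonal.antidiagonal j, (c ij.1 * z ^ ij.1) * (e ij.2 * z ^ ij.2))
        = fun j => (∑ ij ∈ Finset.HasAntidiagonal.antidiagonal j, c ij.1 * e ij.2) * z ^ j := by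
      funext j
      rw [Finset.sum_mul]
      apply Finset.sum_congr rfl
      intro ij hij
      have hmem := Finset.HasAntidiagonal.mem_antidiagonal.mp hij
      rw [← hmem, pow_add]; ring
    rwa [hfix] at h5
  have hga : ∀ z : ℂ, Complex.abs z < R → HasSum
      (fun j => (b j - (if j = 0 then a0 else 0)) * z ^ j) (g z - a0) := by
    intro z hz
    have hzb : z ∈ ball (0:ℂ) 1 := by
      rw [mem_ball_zero_iff, Complex.norm_eq_abs]; linarith
    have h1 : HasSum (fun j => (if j = 0 then a0 else 0) * z ^ j)
        ((if 0 = 0 then a0 else 0) * z ^ 0) :=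
      hasSum_single 0 (fun b hb => by simp [hb])
    simp only [if_pos rfl, pow_zero, mul_one] at h1
    have h2 := (hgb z hzb).sub h1
    have h3 : (fun j => b j * z ^ j - (if j = 0 then a0 else 0) * z ^ j)
        = fun j => (b j - (if j = 0 then a0 else 0)) * z ^ j := by
      funext j; ring
    rwa [h3] at h2
  have hcoeff := coeff_unique hR0 hprod hga
  have hcn := congrFun hcoeff n
  have hanti : (∑ ij ∈ Finset.HasAntidiagonal.antidiagonal n, c ij.1 * e ij.2) = c n * (1 - q * a0) := by
    rw [Finset.sum_eq_single (n, 0)]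
    · simp [he, hb0]
    · intro ij hij hne
      have hij' : ij.1 + ij.2 = n := Finset.HasAntidiagonal.mem_antidiagonal.mp hij
      have h2 : ij.2 ≠ 0 := by
        intro h0
        apply hne
        have : ij.1 = n := by omega
        exact Prod.ext this h0
      by_cases hj2 : ij.2 = n
      · have h0 : ij.1 = 0 := by omega
        rw [h0, hc0, zero_mul]
      · have hlt : ij.2 < n := by omega
        have hz : e ij.2 = 0 := by
          rw [he]
          simp only [if_neg h2]
          rw [hbmid ij.2 (by omega) hlt, mul_zero, sub_zero]
        rw [hz, mul_zero]
    · intro hnot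
      exact absurd (Finset.HasAntidiagonal.mem_antidiagonal.mpr (by simp)) hnot
  have hbn : b n - (if n = 0 then a0 else 0) = b n := by
    rw [if_neg (by omega), sub_zero]
  have h1mq : (1:ℂ) - q * a0 = ((1 - A ^ 2 : ℝ) : ℂ) := by
    have hx : q * a0 = ((Complex.normSq a0 : ℝ) : ℂ) := by rw [hq, mul_comm, Complex.mul_conj]
    rw [hx, ← Complex.sq_abs, ← hA]
    push_cast
    ring
  have hfin : b n = c n * ((1 - A ^ 2 : ℝ) : ℂ) := by
    rw [← h1mq, ← hanti, hcn, hbn]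
  have hA2 : (0:ℝ) ≤ 1 - A ^ 2 := by nlinarith
  have habsbn : Complex.abs (b n) = Complex.abs (c n) * (1 - A ^ 2) := by
    rw [hfin, map_mul, Complex.abs_ofReal, _root_.abs_of_nonneg hA2]
  rw [habsbn]
  nlinarith [hcb n, hA2, Complex.abs.nonneg (c n), pow_pos hR0 n, pow_nonneg hR0.le n]


lemma wiener (f : ℂ → ℂ) (a : ℕ → ℂ)
    (hexp : ∀ z ∈ ball (0:ℂ) 1, HasSum (fun j => a j * z ^ j) (f z))
    (hd : DifferentiableOn ℂ f (ball 0 1))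
    (hb : ∀ z ∈ ball (0:ℂ) 1, Complex.abs (f z) ≤ 1)
    (n : ℕ) (hn : 1 ≤ n) :
    Complex.abs (a n) ≤ 1 - Complex.abs (a 0) ^ 2 := by
  have hball_iff : ∀ z : ℂ, z ∈ ball (0:ℂ) 1 ↔ Complex.abs z < 1 := fun z => by
    rw [mem_ball_zero_iff, Complex.norm_eq_abs]
  have ha0 : f 0 = a 0 := by
    have h := hexp 0 (mem_ball_self one_pos)
    have h2 : HasSum (fun j => a j * (0:ℂ) ^ j) (a 0 * (0:ℂ) ^ 0) :=
      hasSum_single 0 (fun b hb => by simp [zero_pow hb])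
    simpa using h.unique (by simpa using h2)
  have hA1 : Complex.abs (a 0) ≤ 1 := by rw [← ha0]; exact hb 0 (mem_ball_self one_pos)
  rcases eq_or_lt_of_le hA1 with hAeq | hAlt
  · -- |a 0| = 1 : f is constant, all other coefficients vanish
    have hmax : IsMaxOn (norm ∘ f) (ball (0:ℂ) 1) 0 := by
      intro z hz
      simp only [Function.comp_apply, Complex.norm_eq_abs, Set.mem_setOf_eq]
      calc Complex.abs (f z) ≤ 1 := hb z hz
        _ = Complex.abs (a 0) := hAeq.symm
        _ = Complex.abs (f 0) := by rw [ha0]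
    have hconst := Complex.eqOn_of_isPreconnected_of_isMaxOn_norm
      (convex_ball (0:ℂ) 1).isPreconnected isOpen_ball hd (mem_ball_self one_pos) hmax
    have hexp2 : ∀ z : ℂ, Complex.abs z < 1 →
        HasSum (fun j => (if j = 0 then a 0 else 0) * z ^ j) (f z) := by
      intro z hz
      have hzb : z ∈ ball (0:ℂ) 1 := (hball_iff z).mpr hz
      have h1 : HasSum (fun j => (if j = 0 then a 0 else 0) * z ^ j)
          ((if 0 = 0 then a 0 else 0) * z ^ 0) :=
        hasSum_single 0 (fun b hb => by simp [hb])
      simp only [if_pos rfl, pow_zero, mul_one] at h1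
      have hfz : f z = a 0 := by
        have := hconst hzb
        simpa [Function.const, ha0] using this
      rwa [hfz]
    have hae := coeff_unique one_pos (fun z hz => hexp z ((hball_iff z).mpr hz)) hexp2
    have h3 := congrFun hae n
    simp only [if_neg (by omega : ¬ n = 0)] at h3
    rw [h3, hAeq]
    simp
  · -- |a 0| < 1 : averaging over roots of unity + Cauchy estimates
    have hn0 : n ≠ 0 := by omega
    have hnC : (n:ℂ) ≠ 0 := Nat.cast_ne_zero.mpr hn0
    set ω : ℂ := Complex.exp (2 * Real.pi * Complex.I / n) with hωdef
    have hω : IsPrimitiveRoot ω n := Complex.isPrimitiveRoot_exp n hn0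
    have hωn : ω ^ n = 1 := hω.pow_eq_one
    have hωabs : Complex.abs ω = 1 := by
      have h1 : Complex.abs ω ^ n = 1 := by rw [← map_pow, hωn, map_one]
      have h0 : 0 ≤ Complex.abs ω := Complex.abs.nonneg ω
      rcases (pow_eq_one_iff_cases.mp h1) with h | h | h
      · omega
      · exact h
      · exfalso; rw [h.1] at h0; linarith
    have hroot : ∀ j : ℕ, (∑ k ∈ Finset.range n, (ω ^ j) ^ k) = if n ∣ j then (n:ℂ) else 0 := by
      intro j
      by_cases hdvd : n ∣ j
      · rw [if_pos hdvd]
        have h1 : ω ^ j = 1 := (hω.pow_eq_one_iff_dvd j).mpr hdvd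
        simp [h1]
      · rw [if_neg hdvd]
        have hne : ω ^ j ≠ 1 := fun h => hdvd ((hω.pow_eq_one_iff_dvd j).mp h)
        rw [geom_sum_eq hne, ← pow_mul, mul_comm j n, pow_mul, hωn, one_pow, sub_self, zero_div]
    set g : ℂ → ℂ := fun z => (n : ℂ)⁻¹ * ∑ k ∈ Finset.range n, f (ω ^ k * z) with hgdef
    set b : ℕ → ℂ := fun j => if n ∣ j then a j else 0 with hbdef
    have hmemω : ∀ (k : ℕ) (z : ℂ), z ∈ ball (0:ℂ) 1 → ω ^ k * z ∈ ball (0:ℂ) 1 := by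
      intro k z hz
      rw [mem_ball_zero_iff] at hz ⊢
      rw [Complex.norm_eq_abs, map_mul, map_pow, hωabs, one_pow, one_mul]
      exact hz
    have hgb : ∀ z ∈ ball (0:ℂ) 1, HasSum (fun j => b j * z ^ j) (g z) := by
      intro z hz
      have hsum := hasSum_sum (fun k (_ : k ∈ Finset.range n) => hexp _ (hmemω k z hz))
      have hmul := hsum.mul_left ((n:ℂ)⁻¹)
      have hfun : (fun j => (n:ℂ)⁻¹ * ∑ k ∈ Finset.range n, a j * (ω ^ k * z) ^ j)
          = fun j => b j * z ^ j := by
        funext j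
        have : ∀ k, a j * (ω ^ k * z) ^ j = a j * z ^ j * (ω ^ j) ^ k := by
          intro k; rw [mul_pow, ← pow_mul, mul_comm k j, pow_mul]; ring
        rw [Finset.sum_congr rfl (fun k _ => this k), ← Finset.mul_sum, hroot j]
        simp only [hbdef]
        by_cases hdvd : n ∣ j
        · rw [if_pos hdvd, if_pos hdvd]
          field_simp
        · simp [hdvd]
      rwa [hfun] at hmul
    have hgd : DifferentiableOn ℂ g (ball 0 1) := by
      apply DifferentiableOn.const_mul
      apply DifferentiableOn.fun_sum
      intro k _
      exact hd.comp ((differentiable_id.const_mul (ω ^ k)).differentiableOn)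
        (fun z hz => hmemω k z hz)
    have hgb1 : ∀ z ∈ ball (0:ℂ) 1, Complex.abs (g z) ≤ 1 := by
      intro z hz
      rw [hgdef]
      simp only [map_mul, map_inv₀, Complex.abs_natCast]
      rw [inv_mul_le_iff₀ (by exact_mod_cast Nat.pos_of_ne_zero hn0 : (0:ℝ) < (n:ℝ))]
      calc Complex.abs (∑ k ∈ Finset.range n, f (ω ^ k * z))
          ≤ ∑ k ∈ Finset.range n, Complex.abs (f (ω ^ k * z)) := Complex.abs.sum_le _ _
        _ ≤ ∑ _k ∈ Finset.range n, (1:ℝ) :=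
            Finset.sum_le_sum (fun k _ => hb _ (hmemω k z hz))
        _ = n := by simp
        _ ≤ (n:ℝ) * 1 := by simp
    have hg0 : g 0 = a 0 := by
      rw [hgdef]
      simp only [mul_zero, Finset.sum_const, Finset.card_range, nsmul_eq_mul]
      rw [← mul_assoc, inv_mul_cancel₀ hnC, one_mul, ha0]
    have hbmid : ∀ j, 0 < j → j < n → b j = 0 := by
      intro j hj0 hjn
      rw [hbdef]
      simp only
      rw [if_neg]
      intro hdvd
      exact absurd (Nat.le_of_dvd hj0 hdvd) (by omega)
    have hb0' : b 0 = a 0 := by simp [hbdef]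
    have hlast : ∀ R : ℝ, 0 < R → R < 1 →
        Complex.abs (a n) * R ^ n ≤ 1 - Complex.abs (a 0) ^ 2 := by
      intro R hR0 hR1
      have hks := key_step g b (a 0) n hn hgd hgb1 hgb hg0 hAlt hbmid hb0' R hR0 hR1
      rwa [show b n = a n by simp [hbdef]] at hks
    have hten : Filter.Tendsto (fun R : ℝ => Complex.abs (a n) * R ^ n)
        (nhdsWithin 1 (Set.Iio 1)) (nhds (Complex.abs (a n) * 1 ^ n)) :=
      ((continuous_const.mul (continuous_pow n)).tendsto 1).mono_left nhdsWithin_le_nhds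
    rw [one_pow, mul_one] at hten
    refine le_of_tendsto hten ?_
    filter_upwards [Ioo_mem_nhdsLT_of_mem
      (show (1:ℝ) ∈ Set.Ioc 0 1 by constructor <;> norm_num)] with R hR
    exact hlast R hR.1 hR.2

lemma pow_p_bound {x p : ℝ} (hx0 : 0 ≤ x) (hx1 : x ≤ 1) (hp0 : 0 < p) (hp2 : p ≤ 2) :
    x ^ p ≤ 1 - p / 2 * (1 - x ^ 2) := by
  have h := Real.geom_mean_le_arith_mean2_weighted (w₁ := p/2) (w₂ := 1 - p/2)
    (p₁ := x^2) (p₂ := 1) (by linarith) (by linarith) (by positivity) zero_le_one (by ring)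
  rw [Real.one_rpow, mul_one] at h
  have h2 : (x ^ 2) ^ (p / 2 : ℝ) = x ^ p := by
    rw [← Real.rpow_natCast x 2, ← Real.rpow_mul hx0]
    rw [show ((2:ℕ):ℝ) * (p/2) = p by push_cast; ring]
  rw [h2] at h
  linarith

set_option maxHeartbeats 1000000 in
/-- For `f ∈ 𝓑`, `m, N ≥ 1`, `p ∈ (0,2]`:
`|f(z^m)|^p + ∑_{n≥N} |aₙ| rⁿ ≤ 1` for `|z| = r ≤ ρ`, where `ρ` is the minimal
positive root of `2(1+x^m)x^N - p(1-x)(1-x^m) = 0`. -/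
theorem bohr_power_p (f : ℂ → ℂ) (a : ℕ → ℂ)
    (hexp : ∀ z ∈ ball (0 : ℂ) 1, HasSum (fun n => a n * z ^ n) (f z))
    (hana : AnalyticOn ℂ f (ball (0 : ℂ) 1))
    (hb : ∀ z ∈ ball (0 : ℂ) 1, ‖f z‖ ≤ 1)
    (m N : ℕ) (hm : 1 ≤ m) (hN : 1 ≤ N)
    (p : ℝ) (hp : p ∈ Set.Ioc (0 : ℝ) 2)
    (ρ : ℝ) (hρ0 : 0 < ρ)
    (hρroot : 2 * (1 + ρ ^ m) * ρ ^ N - p * (1 - ρ) * (1 - ρ ^ m) = 0)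
    (hρmin : ∀ x : ℝ, 0 < x →
      2 * (1 + x ^ m) * x ^ N - p * (1 - x) * (1 - x ^ m) = 0 → ρ ≤ x)
    (z : ℂ) (r : ℝ) (hrz : ‖z‖ = r) (hr : r ≤ ρ) :
    ‖f (z ^ m)‖ ^ p + ∑' n, ‖a (n + N)‖ * r ^ (n + N) ≤ 1 := by
  simp only [Complex.norm_eq_abs] at hb hrz ⊢
  obtain ⟨hp0, hp2⟩ := hp
  have hr0 : 0 ≤ r := hrz ▸ Complex.abs.nonneg z
  have hd : DifferentiableOn ℂ f (ball (0:ℂ) 1) := hana.differentiableOn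
  have ha0 : f 0 = a 0 := by
    have h := hexp 0 (mem_ball_self one_pos)
    have h2 : HasSum (fun j => a j * (0:ℂ) ^ j) (a 0 * (0:ℂ) ^ 0) :=
      hasSum_single 0 (fun b hb => by simp [zero_pow hb])
    simpa using h.unique (by simpa using h2)
  set A : ℝ := Complex.abs (a 0) with hA
  have hA0 : 0 ≤ A := Complex.abs.nonneg _
  have hA1 : A ≤ 1 := by rw [hA, ← ha0]; exact hb 0 (mem_ball_self one_pos)
  have hA2 : (0:ℝ) ≤ 1 - A ^ 2 := by nlinarith
  -- ρ < 1
  have hρ1 : ρ < 1 := by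
    by_contra hcon
    push_neg at hcon
    have h1 : 1 ≤ ρ ^ m := one_le_pow₀ hcon
    have h2 : ρ ≤ ρ ^ N := by
      calc ρ = ρ ^ 1 := (pow_one ρ).symm
        _ ≤ ρ ^ N := pow_le_pow_right₀ hcon hN
    nlinarith [mul_nonneg (sub_nonneg.2 hcon) (sub_nonneg.2 h1),
      mul_le_mul_of_nonneg_right h2 (by positivity : (0:ℝ) ≤ ρ ^ m),
      mul_nonneg (by linarith : (0:ℝ) ≤ 2 - p)
        (mul_nonneg (sub_nonneg.2 hcon) (sub_nonneg.2 h1))]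
  have hr1 : r < 1 := lt_of_le_of_lt hr hρ1
  have hzm : Complex.abs (z ^ m) = r ^ m := by rw [map_pow, hrz]
  have hrm1 : r ^ m < 1 := pow_lt_one₀ hr0 hr1 (by omega)
  -- the root inequality for r
  have hF : 2 * (1 + r ^ m) * r ^ N ≤ p * (1 - r) * (1 - r ^ m) := by
    by_contra hcon
    push_neg at hcon
    have hrpos : 0 < r := by
      rcases eq_or_lt_of_le hr0 with h | h
      · exfalso
        rw [← h] at hcon
        rw [zero_pow (show m ≠ 0 by omega), zero_pow (show N ≠ 0 by omega)] at hcon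
        nlinarith
      · exact h
    set F : ℝ → ℝ := fun x => 2 * (1 + x ^ m) * x ^ N - p * (1 - x) * (1 - x ^ m) with hFdef
    have hcont : ContinuousOn F (Set.Icc 0 r) := by
      apply Continuous.continuousOn
      fun_prop
    have hF0 : F 0 = -p := by
      simp [hFdef, zero_pow (show N ≠ 0 by omega), zero_pow (show m ≠ 0 by omega)]
    have h0mem : (0:ℝ) ∈ Set.Ioo (F 0) (F r) := by
      constructor
      · rw [hF0]; linarith
      · simp only [hFdef]; linarith
    obtain ⟨c, hc, hFc⟩ := intermediate_value_Ioo hr0 hcont h0mem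
    have hρc := hρmin c hc.1 (by simpa [hFdef] using hFc)
    linarith [hc.2]
  -- Wiener coefficient bounds
  have hW : ∀ j, 1 ≤ j → Complex.abs (a j) ≤ 1 - A ^ 2 :=
    fun j hj => wiener f a hexp hd hb j hj
  -- tail estimate
  have hgeo : Summable (fun i : ℕ => r ^ (i + N)) := by
    simpa [pow_add] using (summable_geometric_of_lt_one hr0 hr1).mul_right (r ^ N)
  have hsummand_le : ∀ i : ℕ, Complex.abs (a (i + N)) * r ^ (i + N)
      ≤ (1 - A ^ 2) * r ^ (i + N) :=
    fun i => mul_le_mul_of_nonneg_right (hW (i + N) (by omega)) (pow_nonneg hr0 _)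
  have hsummable : Summable (fun i : ℕ => Complex.abs (a (i + N)) * r ^ (i + N)) :=
    Summable.of_nonneg_of_le (fun i => by positivity) hsummand_le (hgeo.mul_left _)
  have htail : (∑' i, Complex.abs (a (i + N)) * r ^ (i + N))
      ≤ (1 - A ^ 2) * (r ^ N / (1 - r)) := by
    have h1 := Summable.tsum_le_tsum hsummand_le hsummable (hgeo.mul_left _)
    refine h1.trans ?_
    rw [tsum_mul_left]
    apply mul_le_mul_of_nonneg_left _ hA2
    have h2 : (∑' i : ℕ, r ^ (i + N)) = (∑' i : ℕ, r ^ i) * r ^ N := by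
      rw [← tsum_mul_right]
      exact tsum_congr fun i => by rw [pow_add]
    rw [h2, tsum_geometric_of_lt_one hr0 hr1]
    rw [div_eq_mul_inv, mul_comm]
  -- Schwarz–Pick bound
  have hsp := schwarz_pick f hd hb (z ^ m) (by rw [hzm]; exact hrm1)
  rw [hzm, ha0, ← hA] at hsp
  set t : ℝ := r ^ m with htdef
  have ht0 : 0 ≤ t := by positivity
  have ht1 : t < 1 := hrm1
  have hden : 0 < 1 + A * t := by nlinarith
  set x : ℝ := (A + t) / (1 + A * t) with hxdef
  have hx0 : 0 ≤ x := by positivity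
  have hx1 : x ≤ 1 := by
    rw [hxdef, div_le_one hden]
    nlinarith
  have hfx : Complex.abs (f (z ^ m)) ≤ x := by
    rw [hxdef, le_div_iff₀ hden]
    exact hsp
  have hfp : Complex.abs (f (z ^ m)) ^ p ≤ x ^ p :=
    Real.rpow_le_rpow (Complex.abs.nonneg _) hfx hp0.le
  have hxp : x ^ p ≤ 1 - p / 2 * (1 - x ^ 2) := pow_p_bound hx0 hx1 hp0 hp2
  have hx2 : (1 - A ^ 2) * (1 - t) / (1 + t) ≤ 1 - x ^ 2 := by
    have h1t : (0:ℝ) < 1 + t := by linarith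
    have h1 : 1 - x ^ 2 = ((1 + A*t) ^ 2 - (A + t) ^ 2) / (1 + A*t) ^ 2 := by
      rw [hxdef, div_pow]
      field_simp
    have hfac : (0:ℝ) ≤ (1+t)^2 - (1+A*t)^2 := by
      nlinarith [mul_nonneg ht0 (by linarith : (0:ℝ) ≤ 1 - A)]
    rw [h1, div_le_div_iff₀ h1t (by positivity)]
    nlinarith [mul_nonneg (mul_nonneg hA2 (by linarith : (0:ℝ) ≤ 1 - t)) hfac]
  have hkey : (1 - A ^ 2) * (r ^ N / (1 - r)) ≤ p / 2 * ((1 - A ^ 2) * (1 - t) / (1 + t)) := by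
    have h1r : (0:ℝ) < 1 - r := by linarith
    have h2 : (1 - A ^ 2) * (r ^ N / (1 - r)) = ((1 - A ^ 2) * r ^ N) / (1 - r) := by ring
    have h3 : p / 2 * ((1 - A ^ 2) * (1 - t) / (1 + t))
        = (p * ((1 - A ^ 2) * (1 - t))) / (2 * (1 + t)) := div_mul_div_comm p 2 _ _
    rw [h2, h3, div_le_div_iff₀ h1r (by linarith)]
    nlinarith [mul_le_mul_of_nonneg_left hF hA2]
  have haux : p / 2 * ((1 - A ^ 2) * (1 - t) / (1 + t)) ≤ p / 2 * (1 - x ^ 2) :=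
    mul_le_mul_of_nonneg_left hx2 (by positivity)
  linarith [hfp, hxp, htail, hkey, haux]
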